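/- If a(x) = f(x)/f(x⁻¹) - 1 where f(x) = x⁻¹ - x + √(1-4k²)(x + x⁻¹), then a satisfies the functional equation a(xy) = (a(x) + a(y) + a(x)a(y))/(1 - k²a(x)a(y)), whenever all denominators are nonzero. -/
import Mathlib
set_option maxHeartbeats 1000000 in

theorem a_solves_functional_equation (k s : ℂ) (hs : s ^ 2 = 1 - 4 * k ^ 2)
    (f : ℂ → ℂ) (hf : ∀ x : ℂ, f x = x⁻¹ - x + s * (x + x⁻¹))
    (a : ℂ → ℂ) (ha : ∀ x : ℂ, a x = f x / f x⁻¹ - 1)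
    (x y : ℂ) (hx : x ≠ 0) (hy : y ≠ 0)
    (hfx : f x⁻¹ ≠ 0) (hfy : f y⁻¹ ≠ 0) (hfxy : f (x * y)⁻¹ ≠ 0)
    (hden : 1 - k ^ 2 * (a x * a y) ≠ 0) :
    a (x * y) = (a x + a y + a x * a y) / (1 - k ^ 2 * (a x * a y)) := by
  have key : ∀ z : ℂ, z ≠ 0 → f z⁻¹ ≠ 0 →
      ((1+s)*z^2 + (s-1) ≠ 0 ∧ a z = -2*(z^2-1) / ((1+s)*z^2 + (s-1))) := by
    intro z hz hfz
    have hA : z * f z⁻¹ = (1+s)*z^2 + (s-1) := by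
      rw [hf]; field_simp; ring
    have hAne : (1+s)*z^2 + (s-1) ≠ 0 := hA ▸ mul_ne_zero hz hfz
    refine ⟨hAne, ?_⟩
    rw [hf, inv_inv] at hfz
    rw [ha, hf z, hf z⁻¹, inv_inv]
    rw [div_sub_one hfz, div_eq_div_iff hfz hAne]
    field_simp
    ring
  obtain ⟨hAne, hax⟩ := key x hx hfx
  obtain ⟨hBne, hay⟩ := key y hy hfy
  obtain ⟨hCne, haxy⟩ := key (x*y) (mul_ne_zero hx hy) hfxy
  set A := (1+s)*x^2 + (s-1) with hA
  set B := (1+s)*y^2 + (s-1) with hB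
  set C := (1+s)*(x*y)^2 + (s-1) with hC
  have hABne : A * B ≠ 0 := mul_ne_zero hAne hBne
  have hNum : a x + a y + a x * a y
      = (-2*(x^2-1)*B + -2*(y^2-1)*A + 4*(x^2-1)*(y^2-1)) / (A*B) := by
    rw [hax, hay]; field_simp; ring
  have hDen : 1 - k^2 * (a x * a y)
      = (A*B - 4*k^2*(x^2-1)*(y^2-1)) / (A*B) := by
    rw [hax, hay]; field_simp; ring
  have hDne : A*B - 4*k^2*(x^2-1)*(y^2-1) ≠ 0 := by
    intro h
    apply hden
    rw [hDen, h, zero_div]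
  have hcan : (-2*(x^2-1)*B + -2*(y^2-1)*A + 4*(x^2-1)*(y^2-1)) / (A*B) /
      ((A*B - 4*k^2*(x^2-1)*(y^2-1)) / (A*B))
      = (-2*(x^2-1)*B + -2*(y^2-1)*A + 4*(x^2-1)*(y^2-1)) /
        (A*B - 4*k^2*(x^2-1)*(y^2-1)) := by
    field_simp
  rw [haxy, hNum, hDen, hcan, div_eq_div_iff hCne hDne]
  linear_combination (2*((x*y)^2-1)*(x^2-1)*(y^2-1)) * hs
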